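/- arXiv:1706.07946 — 4 statements merged into one kernel-verified Lean document; each statement's English description precedes it below -/
import Mathlib

section
/- Equivalence of program rules (soundness direction): if a standard CHR transition S ↦_r T applies rule r: H₁ \ H₂ ⇔ C | B, then for any annotation of S with justifications there is a transition with the translated rule rf from the annotated state S^J to a state equivalent to T^J ∧ rem(H₂)^J, where T^J annotates body constraints with the union of head justifications. -/
variable {C J : Type*} [DecidableEq J]

/-- A (generalized) simpagation rule: kept head, removed head, guard and body.
Built-ins in the body are restricted, so the body is a multiset of
user-defined constraints and the guard is a proposition. -/
structure Rule (C : Type*) where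
  kept : Multiset C
  removed : Multiset C
  guard : Prop
  body : Multiset C

/-- Standard CHR transition with rule `r`. -/
def Step (r : Rule C) (S T : Multiset C) : Prop :=
  r.guard ∧ ∃ G : Multiset C,
    S = r.kept + r.removed + G ∧ T = r.kept + r.body + G

/-- Annotated constraints: user constraints with a justification set, and
reserved `rem` constraints remembering a removed annotated constraint,
themselves annotated with a justification set. -/
inductive AConstr (C J : Type*) where
  | user : C → Finset J → AConstr C J
  | rem : C → Finset J → Finset J → AConstr C J

/-- Erasure: drop justification annotations and delete `rem` constraints. -/
def eraseA (S : Multiset (AConstr C J)) : Multiset C :=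
  S.filterMap fun a => match a with
    | AConstr.user c _ => some c
    | AConstr.rem _ _ _ => none

/-- Transition with the translated rule `rf` of rule `r`: the head is matched
against annotated constraints, each removed constraint `R^{F_j}` is remembered
as `rem(R^{F_j})^F`, and every body constraint is annotated with the union `F`
of all head justification sets. -/
def JStep (r : Rule C) (S T : Multiset (AConstr C J)) : Prop :=
  r.guard ∧ ∃ (K R : Multiset (C × Finset J)) (G : Multiset (AConstr C J)),
    K.map Prod.fst = r.kept ∧ R.map Prod.fst = r.removed ∧
    S = K.map (fun p => AConstr.user p.1 p.2) +
        R.map (fun p => AConstr.user p.1 p.2) + G ∧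
    T = K.map (fun p => AConstr.user p.1 p.2) +
        R.map (fun p => AConstr.rem p.1 p.2
          ((K.map Prod.snd).sup ∪ (R.map Prod.snd).sup)) +
        r.body.map (fun b => AConstr.user b
          ((K.map Prod.snd).sup ∪ (R.map Prod.snd).sup)) + G

private lemma eraseA_cons_user (c : C) (F : Finset J) (s : Multiset (AConstr C J)) :
    eraseA (AConstr.user c F ::ₘ s) = c ::ₘ eraseA s :=
  Multiset.filterMap_cons_some _ _ _ rfl

private lemma eraseA_cons_rem (c : C) (F F' : Finset J) (s : Multiset (AConstr C J)) :
    eraseA (AConstr.rem c F F' ::ₘ s) = eraseA s :=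
  Multiset.filterMap_cons_none _ _ rfl

private lemma eraseA_zero : eraseA (0 : Multiset (AConstr C J)) = 0 := rfl

private lemma eraseA_add (A B : Multiset (AConstr C J)) :
    eraseA (A + B) = eraseA A + eraseA B := by
  induction A using Multiset.induction with
  | empty => simp [eraseA_zero]
  | cons a A ih =>
    cases a with
    | user c F => rw [Multiset.cons_add, eraseA_cons_user, eraseA_cons_user, ih,
        Multiset.cons_add]
    | rem c F F' => rw [Multiset.cons_add, eraseA_cons_rem, eraseA_cons_rem, ih]

private lemma eraseA_map_user (M : Multiset (C × Finset J)) :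
    eraseA (M.map fun p => AConstr.user p.1 p.2) = M.map Prod.fst := by
  induction M using Multiset.induction with
  | empty => rfl
  | cons a M ih => rw [Multiset.map_cons, eraseA_cons_user, ih, Multiset.map_cons]

private lemma eraseA_map_userF (F : Finset J) (M : Multiset C) :
    eraseA (M.map fun b => AConstr.user b F) = M := by
  induction M using Multiset.induction with
  | empty => rfl
  | cons a M ih => rw [Multiset.map_cons, eraseA_cons_user, ih]

private lemma eraseA_map_rem (F : Finset J) (M : Multiset (C × Finset J)) :
    eraseA (M.map fun p => AConstr.rem p.1 p.2 F) = 0 := by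
  induction M using Multiset.induction with
  | empty => rfl
  | cons a M ih => rw [Multiset.map_cons, eraseA_cons_rem, ih]
private lemma map_eq_add_split {α β : Type*} (f : α → β) :
    ∀ (t : Multiset β) (s : Multiset α) (u : Multiset β), s.map f = t + u →
      ∃ t' u' : Multiset α, s = t' + u' ∧ t'.map f = t ∧ u'.map f = u := by
  classical
  intro t
  induction t using Multiset.induction with
  | empty => intro s u h; exact ⟨0, s, by simp, by simp, by simpa using h⟩
  | cons b t ih =>
    intro s u h
    rw [Multiset.cons_add] at h
    obtain ⟨a, ha, hfa, hrest⟩ := (Multiset.map_eq_cons f s (t + u) b).mpr h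
    obtain ⟨t', u', hsplit, ht, hu⟩ := ih (s.erase a) u hrest
    refine ⟨a ::ₘ t', u', ?_, by simp [ht, hfa], hu⟩
    rw [Multiset.cons_add, ← hsplit, Multiset.cons_erase ha]

/-- Soundness direction of the equivalence of program rules: every standard
transition `S ↦_r T` lifts, for any justification annotation of `S`, to a
transition of the translated rule whose target erases back to `T`. -/
theorem step_lifts_to_jstep (r : Rule C) (S T : Multiset C)
    (h : Step r S T) (S' : Multiset (C × Finset J))
    (hS : S'.map Prod.fst = S) :
    ∃ T' : Multiset (AConstr C J),
      JStep r (S'.map fun p => AConstr.user p.1 p.2) T' ∧ eraseA T' = T := by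
  obtain ⟨hg, G, hSdec, hTdec⟩ := h
  subst hSdec
  obtain ⟨KR, G', hs, hKR, hG'⟩ := map_eq_add_split Prod.fst (r.kept + r.removed) S' G hS
  obtain ⟨K, R, hkr, hK, hR⟩ := map_eq_add_split Prod.fst r.kept KR r.removed hKR
  subst hs; subst hkr
  set F := ((K.map Prod.snd).sup ∪ (R.map Prod.snd).sup) with hF
  refine ⟨K.map (fun p => AConstr.user p.1 p.2) +
      R.map (fun p => AConstr.rem p.1 p.2 F) +
      r.body.map (fun b => AConstr.user b F) +
      G'.map (fun p => AConstr.user p.1 p.2), ⟨hg, K, R,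
      G'.map (fun p => AConstr.user p.1 p.2), hK, hR, by simp, rfl⟩, ?_⟩
  rw [eraseA_add, eraseA_add, eraseA_add, eraseA_map_user, eraseA_map_user,
    eraseA_map_userF, eraseA_map_rem, hK, hG', hTdec]
  abel
end

section
/- If a transition with a translated rule rf involves no constraint whose justification set contains f, then no constraint added by the rule body contains f in its justification set; hence constraints containing justification f can only be produced from constraints already containing f. -/
variable {C J : Type*} [DecidableEq J]

/-- Annotated constraints with reserved `rem` constraints. -/
inductive AC (C J : Type*) where
  | user : C → Finset J → AC C J
  | rem : C → Finset J → Finset J → AC C J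

/-- The (outer) justification annotation of an annotated constraint. -/
def ann {C J : Type*} : AC C J → Finset J
  | AC.user _ F => F
  | AC.rem _ _ F => F

/-- The union of the justification sets of the matched head constraints. -/
def headJust (K R : Multiset (C × Finset J)) : Finset J :=
  (K.map Prod.snd).sup ∪ (R.map Prod.snd).sup

/-- The constraints added by applying the translated rule with matched kept
head `K`, removed head `R` and original body `B`: one `rem` constraint per
removed head constraint and the annotated body constraints, all annotated
with the union of the head justification sets. -/
def produced (K R : Multiset (C × Finset J)) (B : Multiset C) :
    Multiset (AC C J) :=
  R.map (fun p => AC.rem p.1 p.2 (headJust K R)) +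
    B.map (fun b => AC.user b (headJust K R))

/-- All justification sets occurring in an annotated constraint (for `rem`,
both the inner and the outer annotation). -/
def occursIn {C J : Type*} (f : J) : AC C J → Prop
  | AC.user _ F => f ∈ F
  | AC.rem _ Fc F => f ∈ Fc ∨ f ∈ F

lemma mem_msup {J : Type*} [DecidableEq J] {f : J} {S : Multiset (Finset J)}
    (hf : f ∈ S.sup) : ∃ F ∈ S, f ∈ F := by
  induction S using Multiset.induction with
  | empty => simp at hf
  | cons a S ih =>
    rw [Multiset.sup_cons] at hf
    rw [show a ⊔ S.sup = a ∪ S.sup from rfl, Finset.mem_union] at hf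
    rcases hf with hf | hf
    · exact ⟨a, by simp, hf⟩
    · obtain ⟨F, hF, h2⟩ := ih hf
      exact ⟨F, by simp [hF], h2⟩

/-- If a transition with a translated rule involves no head constraint whose
justification set contains `f`, then no constraint added by the rule body
contains `f` in any of its justification sets; hence constraints containing
`f` can only be produced from constraints already containing `f`. -/
theorem produced_avoids_uninvolved_just (K R : Multiset (C × Finset J))
    (B : Multiset C) (f : J)
    (h : ∀ p ∈ K + R, f ∉ p.2) :
    ∀ a ∈ produced K R B, ¬ occursIn f a := by
  have hHJ : f ∉ headJust K R := by
    simp only [headJust, Finset.mem_union, not_or]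
    constructor <;>
    · intro hf
      obtain ⟨F, hF, hfF⟩ := mem_msup hf
      obtain ⟨p, hp, rfl⟩ := Multiset.mem_map.mp hF
      exact h p (by simp [hp]) hfF
  intro a ha
  rcases Multiset.mem_add.mp ha with hr | hb
  · obtain ⟨p, hp, rfl⟩ := Multiset.mem_map.mp hr
    simp only [occursIn, not_or]
    exact ⟨h p (by simp [hp]), hHJ⟩
  · obtain ⟨b, hb, rfl⟩ := Multiset.mem_map.mp hb
    exact hHJ
end

section
/- Correctness of retraction for the minimum program: for a finite nonempty multiset S of numbers, exhaustively applying the rule min(N) \ min(M) ⇔ N ≤ M | true terminates with exactly one remaining constraint min(m) where m is the minimum of S; moreover, after logically retracting one element x (re-adding all remembered removed constraints whose justifications involve x and deleting all constraints involving x) and re-running to exhaustion, the remaining constraint is min(min(S \ {x})), provided S \ {x} is nonempty. -/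
/-- A state of the (justified) minimum program: the active annotated `min`
constraints together with the remembered removed constraints, each recorded
with the union of the justification sets of the rule application that removed
it. Justifications are the indices of the initial candidates. -/
abbrev MinState (α : Type*) :=
  Multiset (α × Finset ℕ) × Multiset ((α × Finset ℕ) × Finset ℕ)

/-- One application of the rule `min(N) \ min(M) ⇔ N ≤ M | true` with
justifications: the larger candidate is removed and remembered with the union
of the two justification sets. -/
def MinStep {α : Type*} [LinearOrder α] (s t : MinState α) : Prop :=
  ∃ (n m : α) (Fn Fm : Finset ℕ) (G : Multiset (α × Finset ℕ)),
    n ≤ m ∧ s.1 = (n, Fn) ::ₘ (m, Fm) ::ₘ G ∧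
    t.1 = (n, Fn) ::ₘ G ∧ t.2 = ((m, Fm), Fn ∪ Fm) ::ₘ s.2

/-- The initial state for the list `l` of candidates: the `i`-th candidate is
annotated with the singleton justification set `{i}`, nothing is remembered. -/
def minInit {α : Type*} (l : List α) : MinState α :=
  (↑(l.mapIdx fun i a => (a, ({i} : Finset ℕ))), 0)

/-- Logical retraction of the candidate with justification `i`: delete all
active constraints whose justification set contains `i`, re-add all remembered
constraints whose remembering annotation contains `i` (unless their own
justification set contains `i`), and delete the affected `rem` records. -/
def minRetract {α : Type*} (i : ℕ) (s : MinState α) : MinState α :=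
  (s.1.filter (fun p => i ∉ p.2) +
     (s.2.filter (fun q => i ∈ q.2 ∧ i ∉ q.1.2)).map Prod.fst,
   s.2.filter (fun q => i ∉ q.2))

/-- No rule application is possible. -/
def minStuck {α : Type*} [LinearOrder α] (s : MinState α) : Prop :=
  ∀ t, ¬ MinStep s t

section Helpers

variable {α : Type*}

private lemma mapIdx_map_fst : ∀ (l : List α) (g : ℕ → Finset ℕ),
    ((↑(l.mapIdx fun j a => (a, g j)) : Multiset (α × Finset ℕ))).map Prod.fst = ↑l
  | [], g => rfl
  | a :: l, g => by
      simp only [List.mapIdx_cons, ← Multiset.cons_coe, Multiset.map_cons]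
      rw [mapIdx_map_fst l (fun j => g (j + 1))]

private lemma mapIdx_filter_map_fst : ∀ (l : List α) (g : ℕ → Finset ℕ) (x i : ℕ),
    (∀ j < l.length, (x ∈ g j ↔ j = i)) →
    (((↑(l.mapIdx fun j a => (a, g j)) : Multiset (α × Finset ℕ))).filter
        (fun p => x ∉ p.2)).map Prod.fst = ↑(l.eraseIdx i)
  | [], g, x, i, _ => by simp
  | a :: l, g, x, i, h => by
      simp only [List.mapIdx_cons, ← Multiset.cons_coe]
      by_cases hx : x ∈ g 0
      · have hi : i = 0 := ((h 0 (by simp)).1 hx).symm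
        subst hi
        rw [Multiset.filter_cons_of_neg _ (by simpa using hx)]
        rw [mapIdx_filter_map_fst l (fun j => g (j + 1)) x l.length
          (by intro j hj
              constructor
              · intro hxx
                exact absurd ((h (j+1) (by simpa using hj)).1 hxx) (by omega)
              · omega)]
        rw [List.eraseIdx_of_length_le le_rfl]
        rfl
      · have hi : i ≠ 0 := fun hh => hx ((h 0 (by simp)).2 hh.symm)
        obtain ⟨k, rfl⟩ : ∃ k, i = k + 1 := ⟨i - 1, by omega⟩
        rw [Multiset.filter_cons_of_pos _ (by simpa using hx), Multiset.map_cons]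
        rw [mapIdx_filter_map_fst l (fun j => g (j + 1)) x k
          (by intro j hj
              rw [h (j+1) (by simpa using hj)]
              omega)]
        rfl

private lemma list_exists_min [LinearOrder α] (l : List α) (h : l ≠ []) :
    ∃ m ∈ l, ∀ y ∈ l, m ≤ y := by
  induction l with
  | nil => exact absurd rfl h
  | cons a l ih =>
    rcases eq_or_ne l [] with rfl | hl
    · exact ⟨a, List.mem_cons_self, by simp⟩
    · obtain ⟨m, hm, hmin⟩ := ih hl
      rcases le_total a m with hh | hh
      · refine ⟨a, List.mem_cons_self, fun y hy => ?_⟩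
        rcases List.mem_cons.1 hy with rfl | hy
        · exact le_rfl
        · exact hh.trans (hmin y hy)
      · refine ⟨m, List.mem_cons_of_mem _ hm, fun y hy => ?_⟩
        rcases List.mem_cons.1 hy with rfl | hy
        · exact hh
        · exact hmin y hy

variable [LinearOrder α]

private lemma step_card {s t : MinState α} (h : MinStep s t) :
    Multiset.card t.1 + 1 = Multiset.card s.1 := by
  obtain ⟨n, m, Fn, Fm, G, _, hs, ht, _⟩ := h
  simp [hs, ht]

private lemma acc_all (s : MinState α) : Acc (fun a b : MinState α => MinStep b a) s := by
  have key : ∀ k (s : MinState α), Multiset.card s.1 ≤ k →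
      Acc (fun a b : MinState α => MinStep b a) s := by
    intro k
    induction k with
    | zero =>
      intro s hs
      refine Acc.intro s fun t ht => absurd (step_card ht) (by omega)
    | succ k ih =>
      intro s hs
      exact Acc.intro s fun t ht => ih t (by have := step_card ht; omega)
  exact key _ s le_rfl

private lemma exists_step {s : MinState α} (h : 2 ≤ Multiset.card s.1) :
    ∃ t, MinStep s t := by
  obtain ⟨a, ha⟩ := (Multiset.card_pos_iff_exists_mem (s := s.1)).1 (by omega)
  obtain ⟨G1, hG1⟩ := Multiset.exists_cons_of_mem ha
  have hG1c : 1 ≤ Multiset.card G1 := by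
    have := h; rw [hG1] at this; simp at this; omega
  obtain ⟨b, hb⟩ := (Multiset.card_pos_iff_exists_mem (s := G1)).1 (by omega)
  obtain ⟨G, hG⟩ := Multiset.exists_cons_of_mem hb
  rcases le_total a.1 b.1 with hab | hab
  · exact ⟨(a ::ₘ G, ((b.1, b.2), a.2 ∪ b.2) ::ₘ s.2),
      a.1, b.1, a.2, b.2, G, hab, by rw [hG1, hG], rfl, rfl⟩
  · refine ⟨(b ::ₘ G, ((a.1, a.2), b.2 ∪ a.2) ::ₘ s.2),
      b.1, a.1, b.2, a.2, G, hab, ?_, rfl, rfl⟩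
    rw [hG1, hG, Multiset.cons_swap]

private lemma stuck_card {s : MinState α} (h : minStuck s) : Multiset.card s.1 ≤ 1 := by
  by_contra hc
  obtain ⟨t, ht⟩ := exists_step (s := s) (by omega)
  exact h t ht

private lemma cons_step {s t : MinState α} (h : MinStep s t) :
    t.1 + t.2.map Prod.fst = s.1 + s.2.map Prod.fst := by
  obtain ⟨n, m, Fn, Fm, G, _, hs, ht1, ht2⟩ := h
  rw [hs, ht1, ht2, Multiset.map_cons]
  simp only [← Multiset.singleton_add]
  abel

private lemma cons_run {s t : MinState α} (h : Relation.ReflTransGen MinStep s t) :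
    t.1 + t.2.map Prod.fst = s.1 + s.2.map Prod.fst := by
  induction h with
  | refl => rfl
  | tail _ hbc ih => rw [cons_step hbc, ih]

private lemma wit_step_plain {s t : MinState α} (h : MinStep s t) (Q : α → Prop)
    (hQ : ∀ x y, x ≤ y → Q y → Q x) (hw : ∃ p ∈ s.1, Q p.1) : ∃ p ∈ t.1, Q p.1 := by
  obtain ⟨n, m, Fn, Fm, G, hnm, hs, ht, _⟩ := h
  obtain ⟨p, hp, hQp⟩ := hw
  rw [hs] at hp; rw [ht]
  rcases Multiset.mem_cons.1 hp with rfl | hp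
  · exact ⟨_, Multiset.mem_cons_self _ _, hQp⟩
  rcases Multiset.mem_cons.1 hp with rfl | hp
  · exact ⟨(n, Fn), Multiset.mem_cons_self _ _, hQ _ _ hnm hQp⟩
  · exact ⟨p, Multiset.mem_cons_of_mem hp, hQp⟩

private lemma wit_step_retract (i : ℕ) {s t : MinState α} (h : MinStep s t) (Q : α → Prop)
    (hQ : ∀ x y, x ≤ y → Q y → Q x)
    (hw : ∃ p ∈ (minRetract i s).1, Q p.1) : ∃ p ∈ (minRetract i t).1, Q p.1 := by
  obtain ⟨n, m, Fn, Fm, G, hnm, hs, ht1, ht2⟩ := h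
  obtain ⟨p, hp, hQp⟩ := hw
  simp only [minRetract, Multiset.mem_add, Multiset.mem_filter, Multiset.mem_map] at hp ⊢
  rcases hp with ⟨hp, hip⟩ | ⟨q, ⟨hq, hiq1, hiq2⟩, rfl⟩
  · rw [hs] at hp
    rcases Multiset.mem_cons.1 hp with rfl | hp
    · exact ⟨(n, Fn), Or.inl ⟨by rw [ht1]; exact Multiset.mem_cons_self _ _, hip⟩, hQp⟩
    · rcases Multiset.mem_cons.1 hp with rfl | hp
      · by_cases hin : i ∈ Fn
        · refine ⟨(m, Fm), Or.inr ⟨((m, Fm), Fn ∪ Fm), ⟨?_, ?_, hip⟩, rfl⟩, hQp⟩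
          · rw [ht2]; exact Multiset.mem_cons_self _ _
          · simp [hin]
        · exact ⟨(n, Fn), Or.inl ⟨by rw [ht1]; exact Multiset.mem_cons_self _ _, hin⟩,
            hQ _ _ hnm hQp⟩
      · exact ⟨p, Or.inl ⟨by rw [ht1]; exact Multiset.mem_cons_of_mem hp, hip⟩, hQp⟩
  · exact ⟨q.1, Or.inr ⟨q, ⟨by rw [ht2]; exact Multiset.mem_cons_of_mem hq, hiq1, hiq2⟩, rfl⟩,
      hQp⟩

private lemma wit_run_retract (i : ℕ) {s t : MinState α}
    (h : Relation.ReflTransGen MinStep s t) (Q : α → Prop)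
    (hQ : ∀ x y, x ≤ y → Q y → Q x)
    (hw : ∃ p ∈ (minRetract i s).1, Q p.1) : ∃ p ∈ (minRetract i t).1, Q p.1 := by
  induction h with
  | refl => exact hw
  | tail _ hbc ih => exact wit_step_retract i hbc Q hQ ih

omit [LinearOrder α] in
private lemma retract_le (i : ℕ) (s : MinState α) :
    (minRetract i s).1 ≤ (s.1 + s.2.map Prod.fst).filter (fun p => i ∉ p.2) := by
  rw [Multiset.filter_add]
  refine add_le_add le_rfl ?_
  rw [Multiset.filter_map]
  refine Multiset.map_le_map ?_
  refine Multiset.monotone_filter_right _ ?_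
  intro q hq
  exact hq.2

private lemma inv_run (V : Multiset α) {s t : MinState α}
    (hst : Relation.ReflTransGen MinStep s t)
    (h1 : s.1.map Prod.fst ≤ V)
    (h2 : ∃ p ∈ s.1, ∀ y ∈ V, p.1 ≤ y) :
    t.1.map Prod.fst ≤ V ∧ ∃ p ∈ t.1, ∀ y ∈ V, p.1 ≤ y := by
  induction hst with
    | refl => exact ⟨h1, h2⟩
    | tail _ hbc ih =>
      obtain ⟨ih1, ih2⟩ := ih
      constructor
      · obtain ⟨n, m, Fn, Fm, G, _, hs, ht1, _⟩ := hbc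
        refine le_trans (Multiset.map_le_map ?_) ih1
        rw [hs, ht1]
        exact Multiset.cons_le_cons _ (Multiset.le_cons_self _ _)
      · exact wit_step_plain hbc (fun x => ∀ y ∈ V, x ≤ y)
          (fun x y hxy hy z hz => (hxy.trans (hy z hz))) ih2

private lemma run_correct (V : Multiset α) {s t : MinState α}
    (hst : Relation.ReflTransGen MinStep s t)
    (h1 : s.1.map Prod.fst ≤ V)
    (h2 : ∃ p ∈ s.1, ∀ y ∈ V, p.1 ≤ y)
    (hstuck : minStuck t) :
    ∃ m F, t.1 = {(m, F)} ∧ m ∈ V ∧ ∀ y ∈ V, m ≤ y := by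
  obtain ⟨inv1, p, hp, hpmin⟩ := inv_run V hst h1 h2
  have hcard : Multiset.card t.1 = 1 := by
    have h1 := stuck_card hstuck
    have h2 : 0 < Multiset.card t.1 := Multiset.card_pos_iff_exists_mem.2 ⟨p, hp⟩
    omega
  obtain ⟨q, hq⟩ := Multiset.card_eq_one.1 hcard
  have hpq : p = q := by
    have := hp; rw [hq] at this; simpa using this
  subst hpq
  refine ⟨p.1, p.2, by simpa using hq, ?_, hpmin⟩
  have : p.1 ∈ t.1.map Prod.fst := Multiset.mem_map_of_mem _ hp
  exact Multiset.mem_of_le inv1 this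

end Helpers

/-- Correctness of retraction for the minimum program: from a nonempty list of
candidates, (1) exhaustive application of the rule terminates, (2) every final
state contains exactly one constraint `min(m)` where `m` is the minimum of the
candidates, and (3) after logically retracting the candidate at position `i`
and re-running to exhaustion, the single remaining constraint is the minimum
of the remaining candidates (provided some candidate remains). -/
theorem min_program_correct {α : Type*} [LinearOrder α] (l : List α)
    (hl : l ≠ []) :
    (∀ s : MinState α, Relation.ReflTransGen MinStep (minInit l) s →
      Acc (fun a b => MinStep b a) s) ∧
    (∀ s : MinState α, Relation.ReflTransGen MinStep (minInit l) s →
      minStuck s →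
      ∃ (m : α) (F : Finset ℕ), s.1 = {(m, F)} ∧ m ∈ l ∧ ∀ y ∈ l, m ≤ y) ∧
    (∀ s : MinState α, Relation.ReflTransGen MinStep (minInit l) s →
      minStuck s → ∀ i : ℕ, i < l.length → l.eraseIdx i ≠ [] →
      ∀ t : MinState α, Relation.ReflTransGen MinStep (minRetract i s) t →
      minStuck t →
      ∃ (m : α) (F : Finset ℕ), t.1 = {(m, F)} ∧ m ∈ l.eraseIdx i ∧
        ∀ y ∈ l.eraseIdx i, m ≤ y) := by
  have hinit1 : (minInit l).1.map Prod.fst = (↑l : Multiset α) := mapIdx_map_fst l _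
  refine ⟨fun s _ => acc_all s, ?_, ?_⟩
  · -- part 2
    intro s hs hstuck
    obtain ⟨m0, hm0, hmin0⟩ := list_exists_min l hl
    have : m0 ∈ (minInit l).1.map Prod.fst := by
      rw [hinit1]; exact Multiset.mem_coe.2 hm0
    obtain ⟨p, hp, hp1⟩ := Multiset.mem_map.1 this
    obtain ⟨m, F, h1, h2, h3⟩ := run_correct (↑l : Multiset α) hs (le_of_eq hinit1)
      ⟨p, hp, by rw [hp1]; intro y hy; exact hmin0 y (Multiset.mem_coe.1 hy)⟩ hstuck
    exact ⟨m, F, h1, Multiset.mem_coe.1 h2, fun y hy => h3 y (Multiset.mem_coe.2 hy)⟩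
  · -- part 3
    intro s hs hstuck i hi hne t ht htstuck
    have hcons : s.1 + s.2.map Prod.fst = (minInit l).1 := by
      have := cons_run hs
      simpa [minInit] using this
    have hfil : ((minInit l).1.filter (fun p => i ∉ p.2)).map Prod.fst
        = (↑(l.eraseIdx i) : Multiset α) := by
      refine mapIdx_filter_map_fst l _ i i ?_
      intro j _
      simp [eq_comm]
    -- invariant (i'): values of the retracted state are among eraseIdx values
    have h1 : (minRetract i s).1.map Prod.fst ≤ (↑(l.eraseIdx i) : Multiset α) := by
      calc (minRetract i s).1.map Prod.fst
          ≤ ((s.1 + s.2.map Prod.fst).filter (fun p => i ∉ p.2)).map Prod.fst :=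
            Multiset.map_le_map (retract_le i s)
        _ = (↑(l.eraseIdx i) : Multiset α) := by rw [hcons, hfil]
    -- invariant (ii'): witness
    obtain ⟨m0, hm0, hmin0⟩ := list_exists_min (l.eraseIdx i) hne
    have hinitret : (minRetract i (minInit l)).1 = (minInit l).1.filter (fun p => i ∉ p.2) := by
      simp [minRetract, minInit]
    have hw0 : ∃ p ∈ (minRetract i (minInit l)).1,
        ∀ y ∈ (↑(l.eraseIdx i) : Multiset α), p.1 ≤ y := by
      have : m0 ∈ ((minInit l).1.filter (fun p => i ∉ p.2)).map Prod.fst := by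
        rw [hfil]; exact Multiset.mem_coe.2 hm0
      obtain ⟨p, hp, hp1⟩ := Multiset.mem_map.1 this
      refine ⟨p, by rw [hinitret]; exact hp, ?_⟩
      rw [hp1]; intro y hy; exact hmin0 y (Multiset.mem_coe.1 hy)
    have h2 := wit_run_retract i hs (fun x => ∀ y ∈ (↑(l.eraseIdx i) : Multiset α), x ≤ y)
      (fun x y hxy hy z hz => hxy.trans (hy z hz)) hw0
    obtain ⟨m, F, hA, hB, hC⟩ := run_correct (↑(l.eraseIdx i) : Multiset α) ht h1 h2 htstuck
    exact ⟨m, F, hA, Multiset.mem_coe.1 hB, fun y hy => hC y (Multiset.mem_coe.2 hy)⟩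
end

section
/- In the shortest-path program with justifications, every derived path constraint p(X,Z,L)^F has as its justification set exactly the set of justifications of the L edge constraints forming a path of length L from X to Z. -/
variable {V J : Type*} [DecidableEq V] [DecidableEq J]

/-- Constraints of the shortest-path program with justifications:
edge constraints `e(x,y)^F`, path constraints `p(x,y,l)^F`, and remembered
removed path constraints `rem(p(x,y,l)^{Fc})^F`. -/
inductive SPC (V J : Type*) where
  | edge (x y : V) (F : Finset J)
  | path (x y : V) (l : ℕ) (F : Finset J)
  | rem (x y : V) (l : ℕ) (Fc F : Finset J)

/-- One transition of the translated shortest-path program: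
`e(X,Y) ⇒ p(X,Y,1)`, `e(X,Y) ∧ p(Y,Z,L) ⇒ p(X,Z,L+1)`, and
`p(X,Y,L1) \ p(X,Y,L2) ⇔ L1 ≤ L2 | true`; bodies are annotated with the
union of the head justification sets, removed constraints are remembered. -/
def SPStep (S T : Multiset (SPC V J)) : Prop :=
  (∃ (x y : V) (F : Finset J),
      SPC.edge x y F ∈ S ∧ T = SPC.path x y 1 F ::ₘ S) ∨
  (∃ (x y z : V) (l : ℕ) (F₁ F₂ : Finset J),
      SPC.edge x y F₁ ∈ S ∧ SPC.path y z l F₂ ∈ S ∧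
      T = SPC.path x z (l + 1) (F₁ ∪ F₂) ::ₘ S) ∨
  (∃ (x y : V) (l₁ l₂ : ℕ) (F₁ F₂ : Finset J) (G : Multiset (SPC V J)),
      l₁ ≤ l₂ ∧ S = SPC.path x y l₁ F₁ ::ₘ SPC.path x y l₂ F₂ ::ₘ G ∧
      T = SPC.path x y l₁ F₁ ::ₘ SPC.rem x y l₂ F₂ (F₁ ∪ F₂) ::ₘ G)

/-- The initial state: each edge of `E` annotated with its own distinct
justification. -/
def spInit (E : Finset (V × V)) (fE : V × V → J) : Multiset (SPC V J) :=
  E.val.map fun p => SPC.edge p.1 p.2 {fE p}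

def MyPathProp (E : Finset (V × V)) (fE : V × V → J)
    (x z : V) (L : ℕ) (F : Finset J) : Prop :=
  ∃ vs : List V,
    vs.Chain' (fun a b => (a, b) ∈ E) ∧
    vs.head? = some x ∧ vs.getLast? = some z ∧
    vs.length = L + 1 ∧ 1 ≤ L ∧
    F = ((vs.zip vs.tail).map fE).toFinset

def MyInv (E : Finset (V × V)) (fE : V × V → J) (S : Multiset (SPC V J)) : Prop :=
  ∀ c ∈ S, match c with
  | SPC.edge a b F => (a, b) ∈ E ∧ F = {fE (a, b)}
  | SPC.path a b l F => MyPathProp E fE a b l F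
  | SPC.rem a b l F _ => MyPathProp E fE a b l F

lemma myinv_init (E : Finset (V × V)) (fE : V × V → J) :
    MyInv E fE (spInit E fE) := by
  intro c hc
  simp only [spInit, Multiset.mem_map] at hc
  obtain ⟨p, hp, rfl⟩ := hc
  exact ⟨hp, rfl⟩

lemma path_single (E : Finset (V × V)) (fE : V × V → J) {a b : V}
    (h : (a, b) ∈ E) : MyPathProp E fE a b 1 {fE (a, b)} := by
  refine ⟨[a, b], ?_, rfl, rfl, rfl, le_refl 1, ?_⟩ <;> simp [h, List.Chain']

lemma path_cons (E : Finset (V × V)) (fE : V × V → J) {a b c : V} {l : ℕ}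
    {F : Finset J} (hab : (a, b) ∈ E) (hp : MyPathProp E fE b c l F) :
    MyPathProp E fE a c (l + 1) ({fE (a, b)} ∪ F) := by
  obtain ⟨vs, hch, hh, hl, hlen, hl1, hF⟩ := hp
  cases vs with
  | nil => simp at hh
  | cons y rest =>
    simp only [List.head?_cons, Option.some.injEq] at hh
    subst hh
    refine ⟨a :: y :: rest, ?_, rfl, ?_, ?_, ?_, ?_⟩
    · exact List.IsChain.cons_cons hab hch
    · simpa using hl
    · simpa using hlen
    · omega
    · subst hF
      simp

lemma myinv_step {E : Finset (V × V)} {fE : V × V → J}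
    {S T : Multiset (SPC V J)} (hst : SPStep S T) (hS : MyInv E fE S) :
    MyInv E fE T := by
  rcases hst with ⟨a, b, F, he, rfl⟩ | ⟨a, b, c, l, F₁, F₂, he, hp, rfl⟩ |
    ⟨a, b, l₁, l₂, F₁, F₂, G, _, rfl, rfl⟩
  · intro d hd
    rcases Multiset.mem_cons.mp hd with rfl | hd
    · have := hS _ he
      exact this.2 ▸ path_single E fE this.1
    · exact hS _ hd
  · intro d hd
    rcases Multiset.mem_cons.mp hd with rfl | hd
    · have h1 := hS _ he
      have h2 := hS _ hp
      exact h1.2 ▸ path_cons E fE h1.1 h2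
    · exact hS _ hd
  · intro d hd
    rcases Multiset.mem_cons.mp hd with rfl | hd
    · exact hS _ (Multiset.mem_cons_self _ _)
    rcases Multiset.mem_cons.mp hd with rfl | hd
    · exact hS (SPC.path a b l₂ F₂) (by simp)
    · exact hS _ (by simp [hd])

/-- In the shortest-path program with justifications, every derived (active or
remembered) path constraint `p(x,z,L)^F` has as justification set exactly the
justifications of the `L` edges of a directed path of length `L` from `x` to
`z` in the initial graph. -/
theorem sp_justifications_are_path (E : Finset (V × V)) (fE : V × V → J)
    (hinj : Function.Injective fE)
    (S : Multiset (SPC V J))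
    (hreach : Relation.ReflTransGen SPStep (spInit E fE) S)
    (x z : V) (L : ℕ) (F : Finset J)
    (h : SPC.path x z L F ∈ S ∨ ∃ F', SPC.rem x z L F F' ∈ S) :
    ∃ vs : List V,
      vs.Chain' (fun a b => (a, b) ∈ E) ∧
      vs.head? = some x ∧ vs.getLast? = some z ∧
      vs.length = L + 1 ∧ 1 ≤ L ∧
      F = ((vs.zip vs.tail).map fE).toFinset := by
  have hinv : MyInv E fE S := by
    clear h
    induction hreach with
    | refl => exact myinv_init E fE
    | tail _ hstep ih => exact myinv_step hstep ih
  rcases h with h | ⟨F', h⟩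
  · exact hinv _ h
  · exact hinv _ h
end
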